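/- Let m = 808017424794512875886459904961710757005754368000000000 (the order of the Monster group). For every divisor d of 2·5·7^6·59·71, set x = 2²·41·d. Then x divides m, and m/x ≡ 1 (mod 41) holds if and only if x = 1640 or x = 163016. -/
import Mathlib

set_option maxRecDepth 8000
set_option maxHeartbeats 2000000

/-- Sylow-counting step for the normalizer of a cyclic subgroup of order 41
in the Monster group. -/
theorem stmt_7 (d : ℕ) (hd : d ∣ 2 * 5 * 7 ^ 6 * 59 * 71) :
    let m : ℕ := 808017424794512875886459904961710757005754368000000000
    let x : ℕ := 2 ^ 2 * 41 * d
    (x ∣ m) ∧ ((m / x) % 41 = 1 ↔ (x = 1640 ∨ x = 163016)) := by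
  obtain ⟨d', f, hd', hf, rfl⟩ := exists_dvd_and_dvd_of_dvd_mul hd
  obtain ⟨d'', e, hd'', he, rfl⟩ := exists_dvd_and_dvd_of_dvd_mul hd'
  obtain ⟨d3, c, hd3, hc, rfl⟩ := exists_dvd_and_dvd_of_dvd_mul hd''
  obtain ⟨a, b, ha, hb, rfl⟩ := exists_dvd_and_dvd_of_dvd_mul hd3
  obtain ⟨i, hi, rfl⟩ := (Nat.dvd_prime_pow (by norm_num)).mp hc
  rcases (Nat.dvd_prime (by norm_num)).mp ha with rfl | rfl <;>
  rcases (Nat.dvd_prime (by norm_num)).mp hb with rfl | rfl <;>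
  rcases (Nat.dvd_prime (by norm_num)).mp he with rfl | rfl <;>
  rcases (Nat.dvd_prime (by norm_num)).mp hf with rfl | rfl <;>
  interval_cases i <;>
  exact ⟨by norm_num, by norm_num⟩
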